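/- Let φ be a CNF formula with clauses C_1, …, C_m over boolean variables x_1, …, x_n in which every clause contains exactly three literals corresponding to three distinct variables and, for every variable x_i, both the positive literal x_i and the negative literal ¬x_i appear in some clause of φ. Construct an edge-colored hypergraph H as follows: there is one color c_j for each clause C_j; for each variable x_i and each ordered pair of clauses (C_{j1}, C_{j2}) such that C_{j1} contains the literal x_i and C_{j2} contains the literal ¬x_i, there is a vertex v^i_{j1,j2}, which is said to be associated with the variable-clause pairs (x_i, C_{j1}) and (x_i, C_{j2}); for each clause C_j and each variable x_i occurring in C_j, there is a hyperedge e^i_j of color c_j consisting of all vertices associated with the pair (x_i, C_j). Then φ has a satisfying boolean assignment if and only if there exists a vertex coloring of H leaving at most 2 hyperedges of each color unsatisfied. -/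
import Mathlib


open scoped Classical

/-- The vertex set of the hypergraph constructed from a 3-SAT formula with `m` clauses
`C j : Finset (Fin n × Bool)` over `n` variables: a vertex `v^i_{j₁,j₂}` for each variable
`i` and each ordered pair of clauses `(j₁, j₂)` such that the positive literal of `i`
appears in clause `j₁` and the negative literal of `i` appears in clause `j₂`. -/
abbrev SatVtx (n m : ℕ) (C : Fin m → Finset (Fin n × Bool)) : Type :=
  {p : Fin n × Fin m × Fin m // (p.1, true) ∈ C p.2.1 ∧ (p.1, false) ∈ C p.2.2}

/-- Membership of a vertex in the hyperedge `e^i_j` (of color `c_j`): the vertex is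
associated with the variable-clause pair `(x_i, C_j)`. -/
def memEdge {n m : ℕ} {C : Fin m → Finset (Fin n × Bool)}
    (v : SatVtx n m C) (i : Fin n) (j : Fin m) : Prop :=
  v.1.1 = i ∧ (v.1.2.1 = j ∨ v.1.2.2 = j)

lemma stmt10_inj {n m : ℕ} {C : Fin m → Finset (Fin n × Bool)}
    (hsize : ∀ j, (C j).card = 3)
    (hdistinct : ∀ j, ((C j).image Prod.fst).card = 3) (j : Fin m) {i : Fin n}
    (h1 : (i, true) ∈ C j) (h2 : (i, false) ∈ C j) : False := by
  have hinj : Set.InjOn Prod.fst (C j : Set (Fin n × Bool)) := by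
    rw [← Finset.card_image_iff, hdistinct, hsize]
  have := hinj h1 h2 rfl
  simp at this

theorem stmt10 (n m : ℕ) (C : Fin m → Finset (Fin n × Bool))
    (hsize : ∀ j, (C j).card = 3)
    (hdistinct : ∀ j, ((C j).image Prod.fst).card = 3)
    (hall : ∀ (i : Fin n) (b : Bool), ∃ j, (i, b) ∈ C j) :
    (∃ φ : Fin n → Bool, ∀ j : Fin m, ∃ l ∈ C j, φ l.1 = l.2) ↔
    (∃ lam : SatVtx n m C → Fin m, ∀ j : Fin m,
      (Finset.univ.filter (fun i : Fin n =>
        (∃ b, (i, b) ∈ C j) ∧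
        ¬ (∀ v : SatVtx n m C, memEdge v i j → lam v = j))).card ≤ 2) := by
  constructor
  · rintro ⟨φ, hφ⟩
    refine ⟨fun v => if φ v.1.1 then v.1.2.1 else v.1.2.2, fun j => ?_⟩
    obtain ⟨l, hl, hφl⟩ := hφ j
    have hsub : (Finset.univ.filter (fun i : Fin n =>
        (∃ b, (i, b) ∈ C j) ∧
        ¬ (∀ v : SatVtx n m C, memEdge v i j →
            (if φ v.1.1 then v.1.2.1 else v.1.2.2) = j))) ⊆
        ((C j).image Prod.fst).erase l.1 := by
      intro i hi
      simp only [Finset.mem_filter, Finset.mem_univ, true_and] at hi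
      obtain ⟨⟨b, hb⟩, hbad⟩ := hi
      refine Finset.mem_erase.mpr ⟨?_, Finset.mem_image_of_mem _ hb⟩
      rintro rfl
      apply hbad
      rintro ⟨⟨i', j₁, j₂⟩, hv1, hv2⟩ ⟨h1, h2⟩
      simp only at h1 hv1 hv2 ⊢
      subst h1
      have hlmem : (l.1, l.2) ∈ C j := by simpa using hl
      cases hb2 : l.2 with
      | true =>
        have hpos : (l.1, true) ∈ C j := hb2 ▸ hlmem
        have hj1 : j₁ = j := by
          rcases h2 with h2 | h2
          · exact h2
          · exact absurd (h2 ▸ hv2) (fun h => stmt10_inj hsize hdistinct j hpos h)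
        rw [hφl, hb2, if_pos rfl, hj1]
      | false =>
        have hneg : (l.1, false) ∈ C j := hb2 ▸ hlmem
        have hj2 : j₂ = j := by
          rcases h2 with h2 | h2
          · exact absurd (h2 ▸ hv1) (fun h => stmt10_inj hsize hdistinct j h hneg)
          · exact h2
        rw [hφl, hb2, if_neg (by simp), hj2]
    calc _ ≤ (((C j).image Prod.fst).erase l.1).card := Finset.card_le_card hsub
      _ ≤ 2 := by
          rw [Finset.card_erase_of_mem (Finset.mem_image_of_mem _ hl), hdistinct]
  · rintro ⟨lam, hlam⟩
    refine ⟨fun i => decide (∃ j', (i, true) ∈ C j' ∧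
      ∀ v : SatVtx n m C, memEdge v i j' → lam v = j'), fun j => ?_⟩
    have hgood : ∃ i : Fin n, (∃ b, (i, b) ∈ C j) ∧
        ∀ v : SatVtx n m C, memEdge v i j → lam v = j := by
      by_contra h
      push_neg at h
      have hsub : ((C j).image Prod.fst) ⊆ Finset.univ.filter (fun i : Fin n =>
          (∃ b, (i, b) ∈ C j) ∧
          ¬ (∀ v : SatVtx n m C, memEdge v i j → lam v = j)) := by
        intro i hi
        simp only [Finset.mem_image] at hi
        obtain ⟨l, hl, rfl⟩ := hi
        have hP : ∃ b, (l.1, b) ∈ C j := ⟨l.2, by simpa using hl⟩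
        simp only [Finset.mem_filter, Finset.mem_univ, true_and]
        refine ⟨hP, fun hall' => ?_⟩
        obtain ⟨v, hv, hne⟩ := h _ hP
        exact hne (hall' v hv)
      have := Finset.card_le_card hsub
      rw [hdistinct] at this
      have := hlam j
      omega
    obtain ⟨i, ⟨b, hb⟩, hsat⟩ := hgood
    refine ⟨(i, b), hb, ?_⟩
    cases b with
    | true =>
      simp only [decide_eq_true_eq]
      exact ⟨j, hb, hsat⟩
    | false =>
      simp only [decide_eq_false_iff_not]
      rintro ⟨j', hj', hsat'⟩
      set v : SatVtx n m C := ⟨(i, j', j), hj', hb⟩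
      have h1 : lam v = j := hsat v ⟨rfl, Or.inr rfl⟩
      have h2 : lam v = j' := hsat' v ⟨rfl, Or.inl rfl⟩
      exact stmt10_inj hsize hdistinct j (h1 ▸ h2 ▸ hj') hb
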